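/- arXiv:2511.18492 — 3 statements merged into one kernel-verified Lean document; each statement's English description precedes it below -/
import Mathlib

section
/- Let (x_a, v_a, T_a) solve the TCS system with constant weights φ_ab = ζ_ab = 1, zero total momentum Σ_a v_a(0) = 0, and 0 < T_a(t) ≤ T̄ for all a, t. Then V(t) := (Σ_a |v_a(t)|²)^{1/2} satisfies V(t) ≤ V(0) e^{−t/T̄} for all t ≥ 0. -/
open scoped BigOperators
open RealInnerProductSpace

/-- Exponential decay of the velocity functional for constant unit weights. -/
theorem tcs_constant_weight_velocity_decay
    (N d : ℕ) (hN : 0 < N)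
    (v : Fin N → ℝ → EuclideanSpace ℝ (Fin d)) (T : Fin N → ℝ → ℝ)
    (Tbar : ℝ) (hTbar : 0 < Tbar)
    (hT : ∀ a t, 0 < T a t ∧ T a t ≤ Tbar)
    (hmom0 : (∑ a, v a 0) = 0)
    (hv : ∀ a t, HasDerivAt (v a)
      ((N : ℝ)⁻¹ • ∑ b, ((T b t)⁻¹ • v b t - (T a t)⁻¹ • v a t)) t) :
    ∀ t : ℝ, 0 ≤ t →
      Real.sqrt (∑ a, ‖v a t‖ ^ 2)
        ≤ Real.sqrt (∑ a, ‖v a 0‖ ^ 2) * Real.exp (-t / Tbar) := by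
  have hN' : (N : ℝ) ≠ 0 := Nat.cast_ne_zero.mpr hN.ne'
  set D : Fin N → ℝ → EuclideanSpace ℝ (Fin d) :=
    fun a t => (N : ℝ)⁻¹ • ∑ b, ((T b t)⁻¹ • v b t - (T a t)⁻¹ • v a t) with hD
  -- momentum conservation
  have hSum0 : ∀ t, (∑ a, v a t) = 0 := by
    intro t
    have hS : ∀ s, HasDerivAt (fun u => ∑ a, v a u) (∑ a, D a s) s := fun s =>
      HasDerivAt.fun_sum (fun a _ => hv a s)
    have hDzero : ∀ s, (∑ a, D a s) = 0 := by
      intro s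
      simp only [hD, ← Finset.smul_sum]
      have : (∑ a : Fin N, ∑ b : Fin N, ((T b s)⁻¹ • v b s - (T a s)⁻¹ • v a s)) = 0 := by
        simp only [Finset.sum_sub_distrib, Finset.sum_const, Finset.card_univ,
          Fintype.card_fin, Finset.smul_sum, sub_self]
      rw [this, smul_zero]
    have hconst : (∑ a, v a t) = (∑ a, v a 0) := by
      have hdiff : Differentiable ℝ (fun u => ∑ a, v a u) := fun s => (hS s).differentiableAt
      exact is_const_of_deriv_eq_zero hdiff (fun s => by rw [(hS s).deriv, hDzero]) t 0
    rw [hconst, hmom0]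
  -- energy
  set E : ℝ → ℝ := fun t => ∑ a, ‖v a t‖ ^ 2 with hE
  set E' : ℝ → ℝ := fun t => -2 * ∑ a, (T a t)⁻¹ * ‖v a t‖ ^ 2 with hE'
  have hEderiv : ∀ t, HasDerivAt E (E' t) t := by
    intro t
    have h1 : HasDerivAt E (∑ a, (⟪v a t, D a t⟫ + ⟪D a t, v a t⟫)) t := by
      have hterm : ∀ a ∈ Finset.univ, HasDerivAt (fun u => ‖v a u‖ ^ 2)
          (⟪v a t, D a t⟫ + ⟪D a t, v a t⟫) t := by
        intro a _
        have h2 := (hv a t).inner ℝ (hv a t)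
        have hfun : (fun u => ‖v a u‖ ^ 2) = (fun u => (⟪v a u, v a u⟫ : ℝ)) :=
          funext fun u => (real_inner_self_eq_norm_sq _).symm
        rw [hfun]
        exact h2
      simpa using HasDerivAt.fun_sum hterm
    convert h1 using 1
    have hsymm : ∀ a, (⟪v a t, D a t⟫ + ⟪D a t, v a t⟫ : ℝ) = 2 * ⟪v a t, D a t⟫ := by
      intro a; rw [real_inner_comm]; ring
    rw [Finset.sum_congr rfl (fun a _ => hsymm a)]
    set X : EuclideanSpace ℝ (Fin d) := ∑ b, (T b t)⁻¹ • v b t with hX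
    have hinner : ∀ a : Fin N, (⟪v a t, D a t⟫ : ℝ)
        = (N : ℝ)⁻¹ * ⟪v a t, X⟫ - (T a t)⁻¹ * ‖v a t‖ ^ 2 := by
      intro a
      simp only [hD, inner_smul_right]
      rw [Finset.sum_sub_distrib, inner_sub_right, Finset.sum_const, Finset.card_univ,
        Fintype.card_fin, mul_sub]
      congr 1
      rw [← Nat.cast_smul_eq_nsmul ℝ, inner_smul_right, inner_smul_right,
        real_inner_self_eq_norm_sq]
      field_simp
    have hzero : (∑ a, (⟪v a t, X⟫ : ℝ)) = 0 := by
      rw [← sum_inner, hSum0 t, inner_zero_left]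
    rw [Finset.sum_congr rfl (fun a _ => by rw [hinner a])]
    have : (∑ a, (2 * ((N : ℝ)⁻¹ * ⟪v a t, X⟫ - (T a t)⁻¹ * ‖v a t‖ ^ 2)))
        = 2 * (N : ℝ)⁻¹ * (∑ a, (⟪v a t, X⟫ : ℝ)) - 2 * ∑ a, (T a t)⁻¹ * ‖v a t‖ ^ 2 := by
      rw [Finset.mul_sum, Finset.mul_sum, ← Finset.sum_sub_distrib]
      exact Finset.sum_congr rfl fun a _ => by ring
    rw [this, hzero, hE']
    ring
  -- derivative bound
  have hbound : ∀ t, E' t + (2 / Tbar) * E t ≤ 0 := by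
    intro t
    have hterm : ∀ a : Fin N, Tbar⁻¹ * ‖v a t‖ ^ 2 ≤ (T a t)⁻¹ * ‖v a t‖ ^ 2 := fun a =>
      mul_le_mul_of_nonneg_right (inv_anti₀ (hT a t).1 (hT a t).2) (by positivity)
    have hsum : Tbar⁻¹ * E t ≤ ∑ a, (T a t)⁻¹ * ‖v a t‖ ^ 2 := by
      rw [hE, Finset.mul_sum]
      exact Finset.sum_le_sum fun a _ => hterm a
    have hEle : E' t ≤ -2 * (Tbar⁻¹ * E t) := by
      rw [hE']; dsimp only; linarith
    rw [div_eq_mul_inv]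
    linarith
  -- Gronwall
  set c : ℝ := 2 / Tbar with hc
  have hcpos : 0 < c := by positivity
  set g : ℝ → ℝ := fun t => E t * Real.exp (c * t) with hg
  have hgderiv : ∀ t, HasDerivAt g (E' t * Real.exp (c * t) + E t * (c * Real.exp (c * t))) t := by
    intro t
    have hexp : HasDerivAt (fun t => Real.exp (c * t)) (c * Real.exp (c * t)) t := by
      simpa [mul_comm] using ((hasDerivAt_id t).const_mul c).exp
    exact (hEderiv t).mul hexp
  have hganti : Antitone g := by
    apply antitone_of_deriv_nonpos (fun t => (hgderiv t).differentiableAt)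
    intro t
    rw [(hgderiv t).deriv]
    have he : (0:ℝ) < Real.exp (c * t) := Real.exp_pos _
    calc E' t * Real.exp (c * t) + E t * (c * Real.exp (c * t))
        = (E' t + c * E t) * Real.exp (c * t) := by ring
      _ ≤ 0 := mul_nonpos_of_nonpos_of_nonneg (by rw [hc]; exact hbound t) he.le
  intro t ht
  have h := hganti ht
  simp only [hg, mul_zero, Real.exp_zero, mul_one] at h
  have he : (0:ℝ) < Real.exp (c * t) := Real.exp_pos _
  have hkey : E t ≤ E 0 * Real.exp (-c * t) := by
    have h3 : E t ≤ E 0 / Real.exp (c * t) := by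
      rw [le_div_iff₀ he]; exact h
    calc E t ≤ E 0 / Real.exp (c * t) := h3
      _ = E 0 * Real.exp (-c * t) := by
          rw [div_eq_mul_inv, ← Real.exp_neg, neg_mul]
  have hEnonneg : ∀ s, 0 ≤ E s := fun s => Finset.sum_nonneg fun a _ => by positivity
  have h1 : Real.sqrt (E t) ≤ Real.sqrt (E 0 * Real.exp (-c * t)) :=
    Real.sqrt_le_sqrt hkey
  have h2 : Real.sqrt (E 0 * Real.exp (-c * t)) = Real.sqrt (E 0) * Real.exp (-t / Tbar) := by
    rw [Real.sqrt_mul (hEnonneg 0)]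
    congr 1
    rw [show (-c * t) = (-t / Tbar) + (-t / Tbar) by rw [hc]; ring, Real.exp_add]
    exact Real.sqrt_mul_self (Real.exp_pos _).le
  exact h1.trans_eq h2
end

section
/- Let (x_a, v_a, T_a) solve the TCS system with weights satisfying 0 < φ_lower ≤ φ_ab ≤ φ_lower + ε and 0 < T_lower ≤ T_a(t) ≤ T_upper, with zero total momentum. If ε ≤ φ_lower T_lower/(2 T_upper), then V(t) = (Σ_a |v_a(t)|²)^{1/2} satisfies V(t) ≤ V(0) e^{−(φ_lower/(2T_upper)) t}. -/
open scoped BigOperators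
open RealInnerProductSpace

private lemma tcs_aux_mul_le {c e X Y : ℝ} (hc0 : 0 ≤ c) (hce : c ≤ e)
    (hXY : X ≤ Y) (hY : 0 ≤ Y) : c * X ≤ e * Y := by
  rcases le_total X 0 with h | h
  · exact le_trans (mul_nonpos_of_nonneg_of_nonpos hc0 h) (mul_nonneg (hc0.trans hce) hY)
  · exact mul_le_mul hce hXY h (hc0.trans hce)

/-- Velocity decay under small perturbations of a constant communication weight. -/
theorem tcs_perturbed_weight_velocity_decay
    (N d : ℕ) (hN : 0 < N)
    (v : Fin N → ℝ → EuclideanSpace ℝ (Fin d)) (T : Fin N → ℝ → ℝ)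
    (φ : Fin N → Fin N → ℝ → ℝ)
    (φl Tl Tu ε : ℝ) (hφl : 0 < φl) (hTl : 0 < Tl) (hTu : 0 < Tu) (hε : 0 < ε)
    (hφ : ∀ a b t, φl ≤ φ a b t ∧ φ a b t ≤ φl + ε)
    (hT : ∀ a t, Tl ≤ T a t ∧ T a t ≤ Tu)
    (hmom : ∀ t : ℝ, (∑ a, v a t) = 0)
    (hv : ∀ a t, HasDerivAt (v a)
      ((N : ℝ)⁻¹ • ∑ b, φ a b t • ((T b t)⁻¹ • v b t - (T a t)⁻¹ • v a t)) t)
    (hεsmall : ε ≤ φl * Tl / (2 * Tu)) :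
    ∀ t : ℝ, 0 ≤ t →
      Real.sqrt (∑ a, ‖v a t‖ ^ 2)
        ≤ Real.sqrt (∑ a, ‖v a 0‖ ^ 2) * Real.exp (-(φl / (2 * Tu)) * t) := by
  have hTl' : ∀ a t, 0 < T a t := fun a t => lt_of_lt_of_le hTl (hT a t).1
  set D : Fin N → ℝ → EuclideanSpace ℝ (Fin d) := fun a t =>
    (N : ℝ)⁻¹ • ∑ b, φ a b t • ((T b t)⁻¹ • v b t - (T a t)⁻¹ • v a t) with hD
  set f : ℝ → ℝ := fun t => ∑ a, ‖v a t‖ ^ 2 with hfdef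
  set F : ℝ → ℝ := fun t => ∑ a, 2 * ⟪v a t, D a t⟫ with hFdef
  have hf0 : ∀ t, 0 ≤ f t := fun t => Finset.sum_nonneg fun a _ => sq_nonneg _
  -- derivative of f
  have hf' : ∀ t, HasDerivAt f (F t) t := by
    intro t
    apply HasDerivAt.fun_sum
    intro a _
    have h1 := ((hv a t).inner ℝ (hv a t))
    have h2 : (fun t => ⟪v a t, v a t⟫) = fun t => ‖v a t‖ ^ 2 := by
      funext s; rw [real_inner_self_eq_norm_sq]
    rw [h2] at h1
    convert h1 using 1
    case e'_4 => rfl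
    rw [real_inner_comm (D a t) (v a t)]
    ring
  -- key inequality
  have key : ∀ t, F t ≤ -(φl / Tu) * f t := by
    intro t
    have hinner : ∀ a, ⟪v a t, D a t⟫
        = (N : ℝ)⁻¹ * ∑ b, φ a b t *
          ((T b t)⁻¹ * ⟪v a t, v b t⟫ - (T a t)⁻¹ * ‖v a t‖ ^ 2) := by
      intro a
      rw [hD]
      simp only [inner_smul_right, inner_sum, inner_sub_right, real_inner_self_eq_norm_sq]
    have hFeq : F t = 2 * (N : ℝ)⁻¹ *
        ∑ a, ∑ b, φ a b t *
          ((T b t)⁻¹ * ⟪v a t, v b t⟫ - (T a t)⁻¹ * ‖v a t‖ ^ 2) := by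
      simp only [hFdef]
      rw [mul_assoc, Finset.mul_sum, Finset.mul_sum]
      exact Finset.sum_congr rfl fun a _ => by rw [hinner a]
    -- termwise bound
    have hterm : ∀ a b, φ a b t *
        ((T b t)⁻¹ * ⟪v a t, v b t⟫ - (T a t)⁻¹ * ‖v a t‖ ^ 2)
        ≤ φl * ((T b t)⁻¹ * ⟪v a t, v b t⟫)
          + ε * (Tl⁻¹ * (‖v a t‖ * ‖v b t‖))
          - φl * (Tu⁻¹ * ‖v a t‖ ^ 2) := by
      intro a b
      have hφ1 := (hφ a b t).1
      have hφ2 := (hφ a b t).2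
      have hTb := hT b t
      have hTa := hT a t
      have hr : ⟪v a t, v b t⟫ ≤ ‖v a t‖ * ‖v b t‖ := real_inner_le_norm _ _
      have hX : (T b t)⁻¹ * ⟪v a t, v b t⟫ ≤ Tl⁻¹ * (‖v a t‖ * ‖v b t‖) := by
        rcases le_total (⟪v a t, v b t⟫ : ℝ) 0 with h | h
        · exact le_trans
            (mul_nonpos_of_nonneg_of_nonpos (inv_pos.mpr (hTl' b t)).le h)
            (by positivity)
        · calc (T b t)⁻¹ * ⟪v a t, v b t⟫ ≤ Tl⁻¹ * ⟪v a t, v b t⟫ :=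
                mul_le_mul_of_nonneg_right (inv_anti₀ hTl hTb.1) h
            _ ≤ Tl⁻¹ * (‖v a t‖ * ‖v b t‖) :=
                mul_le_mul_of_nonneg_left hr (by positivity)
      have h1 : (φ a b t - φl) * ((T b t)⁻¹ * ⟪v a t, v b t⟫)
          ≤ ε * (Tl⁻¹ * (‖v a t‖ * ‖v b t‖)) :=
        tcs_aux_mul_le (by linarith) (by linarith) hX (by positivity)
      have h2 : φl * (Tu⁻¹ * ‖v a t‖ ^ 2) ≤ φ a b t * ((T a t)⁻¹ * ‖v a t‖ ^ 2) := by
        apply mul_le_mul hφ1 _ (by positivity) (le_of_lt (lt_of_lt_of_le hφl hφ1))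
        exact mul_le_mul_of_nonneg_right (inv_anti₀ (hTl' a t) hTa.2) (sq_nonneg _)
      nlinarith [h1, h2]
    have hsum : ∑ a, ∑ b, φ a b t *
        ((T b t)⁻¹ * ⟪v a t, v b t⟫ - (T a t)⁻¹ * ‖v a t‖ ^ 2)
        ≤ -(φl / (2 * Tu)) * (N : ℝ) * f t := by
      have step1 : ∑ a, ∑ b, φ a b t *
          ((T b t)⁻¹ * ⟪v a t, v b t⟫ - (T a t)⁻¹ * ‖v a t‖ ^ 2)
          ≤ ∑ a, ∑ b, (φl * ((T b t)⁻¹ * ⟪v a t, v b t⟫)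
            + ε * (Tl⁻¹ * (‖v a t‖ * ‖v b t‖))
            - φl * (Tu⁻¹ * ‖v a t‖ ^ 2)) :=
        Finset.sum_le_sum fun a _ => Finset.sum_le_sum fun b _ => hterm a b
      have s1 : ∑ a : Fin N, ∑ b : Fin N, φl * ((T b t)⁻¹ * ⟪v a t, v b t⟫) = 0 := by
        rw [Finset.sum_comm]
        apply Finset.sum_eq_zero
        intro b _
        have h0 : (⟪∑ a, v a t, v b t⟫ : ℝ) = 0 := by
          rw [hmom]; exact inner_zero_left _
        rw [sum_inner] at h0
        calc ∑ a : Fin N, φl * ((T b t)⁻¹ * ⟪v a t, v b t⟫)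
            = φl * (T b t)⁻¹ * ∑ a : Fin N, ⟪v a t, v b t⟫ := by
              rw [Finset.mul_sum]
              exact Finset.sum_congr rfl fun a _ => by ring
          _ = 0 := by rw [h0, mul_zero]
      have s2 : ∑ a : Fin N, ∑ b : Fin N, ε * (Tl⁻¹ * (‖v a t‖ * ‖v b t‖))
          = ε * Tl⁻¹ * (∑ a, ‖v a t‖) ^ 2 := by
        rw [sq, Finset.sum_mul_sum, Finset.mul_sum]
        exact Finset.sum_congr rfl fun a _ => by
          rw [Finset.mul_sum]
          exact Finset.sum_congr rfl fun b _ => by ring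
      have s3 : ∑ a : Fin N, ∑ b : Fin N, φl * (Tu⁻¹ * ‖v a t‖ ^ 2)
          = (N : ℝ) * (φl * Tu⁻¹ * f t) := by
        rw [hfdef]
        simp only [Finset.sum_const, Finset.card_univ, Fintype.card_fin, nsmul_eq_mul]
        rw [Finset.mul_sum, Finset.mul_sum]
        exact Finset.sum_congr rfl fun a _ => by ring
      have cs : (∑ a, ‖v a t‖) ^ 2 ≤ (N : ℝ) * f t := by
        have := sq_sum_le_card_mul_sum_sq (s := (Finset.univ : Finset (Fin N)))
          (f := fun a => ‖v a t‖)
        simpa [hfdef] using this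
      have hεT : ε * Tl⁻¹ ≤ φl / (2 * Tu) := by
        calc ε * Tl⁻¹ ≤ (φl * Tl / (2 * Tu)) * Tl⁻¹ :=
              mul_le_mul_of_nonneg_right hεsmall (by positivity)
          _ = φl / (2 * Tu) := by field_simp
      calc ∑ a, ∑ b, φ a b t *
            ((T b t)⁻¹ * ⟪v a t, v b t⟫ - (T a t)⁻¹ * ‖v a t‖ ^ 2)
          ≤ ∑ a, ∑ b, (φl * ((T b t)⁻¹ * ⟪v a t, v b t⟫)
            + ε * (Tl⁻¹ * (‖v a t‖ * ‖v b t‖))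
            - φl * (Tu⁻¹ * ‖v a t‖ ^ 2)) := step1
        _ = (∑ a : Fin N, ∑ b : Fin N, φl * ((T b t)⁻¹ * ⟪v a t, v b t⟫))
            + (∑ a : Fin N, ∑ b : Fin N, ε * (Tl⁻¹ * (‖v a t‖ * ‖v b t‖)))
            - ∑ a : Fin N, ∑ b : Fin N, φl * (Tu⁻¹ * ‖v a t‖ ^ 2) := by
              simp [Finset.sum_add_distrib, Finset.sum_sub_distrib]
        _ = 0 + ε * Tl⁻¹ * (∑ a, ‖v a t‖) ^ 2 - (N : ℝ) * (φl * Tu⁻¹ * f t) := by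
              rw [s1, s2, s3]
        _ ≤ (φl / (2 * Tu)) * ((N : ℝ) * f t) - (N : ℝ) * (φl * Tu⁻¹ * f t) := by
            have h1 : ε * Tl⁻¹ * (∑ a, ‖v a t‖) ^ 2 ≤ (φl / (2 * Tu)) * ((N : ℝ) * f t) :=
              tcs_aux_mul_le (by positivity) hεT cs
                (mul_nonneg (Nat.cast_nonneg N) (hf0 t))
            linarith
        _ = -(φl / (2 * Tu)) * (N : ℝ) * f t := by
            field_simp; ring
    rw [hFeq]
    have hNpos : (0 : ℝ) < (N : ℝ) := Nat.cast_pos.mpr hN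
    calc 2 * (N : ℝ)⁻¹ * ∑ a, ∑ b, φ a b t *
          ((T b t)⁻¹ * ⟪v a t, v b t⟫ - (T a t)⁻¹ * ‖v a t‖ ^ 2)
        ≤ 2 * (N : ℝ)⁻¹ * (-(φl / (2 * Tu)) * (N : ℝ) * f t) :=
          mul_le_mul_of_nonneg_left hsum (by positivity)
      _ = -(φl / Tu) * f t := by field_simp
  -- Gronwall via monotonicity of g = f * exp(λ t)
  set lam : ℝ := φl / Tu with hlam
  have hlam0 : 0 < lam := div_pos hφl hTu
  set g : ℝ → ℝ := fun t => f t * Real.exp (lam * t) with hg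
  have hg' : ∀ t, HasDerivAt g (F t * Real.exp (lam * t)
      + f t * (lam * Real.exp (lam * t))) t := by
    intro t
    have he : HasDerivAt (fun t : ℝ => Real.exp (lam * t)) (lam * Real.exp (lam * t)) t := by
      have := ((hasDerivAt_id t).const_mul lam).exp
      simpa [mul_comm] using this
    exact (hf' t).mul he
  have hganti : AntitoneOn g (Set.Ici 0) := by
    apply antitoneOn_of_deriv_nonpos (convex_Ici 0)
    · exact Continuous.continuousOn
        (Differentiable.continuous fun t => (hg' t).differentiableAt)
    · intro t _
      exact ((hg' t).differentiableAt).differentiableWithinAt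
    · intro t _
      rw [(hg' t).deriv]
      have h3 : 0 ≤ (-(F t) - lam * f t) * Real.exp (lam * t) :=
        mul_nonneg (by have := key t; linarith) (Real.exp_pos _).le
      nlinarith [h3]
  intro t ht
  have hgle : g t ≤ g 0 := hganti Set.self_mem_Ici (Set.mem_Ici.mpr ht) ht
  have hft : f t ≤ f 0 * Real.exp (-(lam * t)) := by
    rw [hg] at hgle
    simp only [mul_zero, Real.exp_zero, mul_one] at hgle
    have hrw : f t = f t * Real.exp (lam * t) * Real.exp (-(lam * t)) := by
      rw [mul_assoc, ← Real.exp_add]; simp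
    rw [hrw]
    exact mul_le_mul_of_nonneg_right hgle (Real.exp_pos _).le
  calc Real.sqrt (f t) ≤ Real.sqrt (f 0 * Real.exp (-(lam * t))) :=
        Real.sqrt_le_sqrt hft
    _ = Real.sqrt (f 0) * Real.sqrt (Real.exp (-(lam * t))) :=
        Real.sqrt_mul (hf0 0) _
    _ = Real.sqrt (f 0) * Real.exp (-(lam * t) / 2) := by
        rw [← Real.exp_half]
    _ = Real.sqrt (f 0) * Real.exp (-(φl / (2 * Tu)) * t) := by
        congr 1
        rw [hlam]
        ring
end

section
/- For γ > √2, the ratio of modified Bessel functions satisfies 1 − 1/(2γ) ≤ K_0(γ)/K_1(γ) ≤ 1 − 1/(2γ) + 3/(8γ²) + 3/(16γ³). -/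
open MeasureTheory Set Real Filter Topology

/-- sqrt upper bound -/
lemma BKsqrt_ub {b t : ℝ} (hb : 0 < b) (ht : 0 ≤ t) :
    Real.sqrt (b + t) ≤ Real.sqrt b * (1 + t / (2 * b)) := by
  have h1 : (0:ℝ) ≤ 1 + t / (2*b) := by positivity
  have h2 : Real.sqrt b * (1 + t / (2 * b)) = Real.sqrt (b * (1 + t / (2*b))^2) := by
    rw [Real.sqrt_mul hb.le, Real.sqrt_sq h1]
  rw [h2]
  apply Real.sqrt_le_sqrt
  have h3 : b * (1 + t / (2*b))^2 = b + t + t^2/(4*b) := by field_simp; ring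
  have h4 : (0:ℝ) ≤ t^2/(4*b) := by positivity
  linarith

/-- sqrt lower bound -/
lemma BKsqrt_lb {b t : ℝ} (hb : 0 < b) (ht : 0 ≤ t) :
    Real.sqrt b * (1 + t / (2 * b) - t^2 / (8 * b^2)) ≤ Real.sqrt (b + t) := by
  set s : ℝ := 1 + t / (2 * b) - t^2 / (8 * b^2) with hs
  rcases le_or_gt s 0 with h | h
  · calc Real.sqrt b * s ≤ 0 := mul_nonpos_of_nonneg_of_nonpos (Real.sqrt_nonneg b) h
    _ ≤ _ := Real.sqrt_nonneg _
  · have h2 : t^2 < 8*b^2 + 4*b*t := by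
      have h' := h
      rw [hs, sub_pos, div_lt_iff₀ (by positivity : (0:ℝ) < 8*b^2)] at h'
      calc t^2 < (1 + t/(2*b)) * (8*b^2) := h'
        _ = 8*b^2 + 4*b*t := by field_simp; ring
    have hx8 : t ≤ 6 * b := by nlinarith [sq_nonneg (t - 8*b)]
    have h3 : Real.sqrt b * s = Real.sqrt (b * s^2) := by
      rw [Real.sqrt_mul hb.le, Real.sqrt_sq h.le]
    rw [h3]
    apply Real.sqrt_le_sqrt
    rw [hs]
    have expand : b * (1 + t / (2 * b) - t^2 / (8 * b^2))^2
        = b + t - (t^3 * (8*b - t)) / (64 * b^3) := by field_simp; ring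
    rw [expand]
    have h5 : 0 ≤ (t^3 * (8*b - t)) / (64 * b^3) := by
      apply div_nonneg _ (by positivity)
      apply mul_nonneg (by positivity)
      linarith
    linarith

lemma BKshift_int (γ : ℝ) {s : ℝ} (hs : -1 < s) :
    IntegrableOn (fun l => Real.exp (-l) * (l - γ) ^ s) (Ioi γ) := by
  have emb : MeasurableEmbedding (fun x : ℝ => x + γ) :=
    (MeasurableEquiv.addRight γ).measurableEmbedding
  have MP : MeasurePreserving (fun x : ℝ => x + γ) (volume.restrict (Ioi 0)) (volume.restrict (Ioi γ)) := by
    have := (measurePreserving_add_right (volume : Measure ℝ) γ).restrict_preimage_emb emb (Ioi γ)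
    simpa [preimage_add_const_Ioi] using this
  rw [IntegrableOn, ← MP.integrable_comp_emb emb]
  have h : IntegrableOn (fun x => Real.exp (-γ) * (Real.exp (-x) * x ^ (s + 1 - 1))) (Ioi 0) :=
    (Real.GammaIntegral_convergent (s := s + 1) (by linarith)).const_mul _
  apply h.congr_fun ?_ measurableSet_Ioi
  intro x hx
  simp only [Function.comp, add_sub_cancel_right, add_sub_cancel_right, neg_add]
  rw [Real.exp_add]
  ring

lemma BKshift_val (γ : ℝ) {s : ℝ} (hs : -1 < s) :
    ∫ l in Ioi γ, Real.exp (-l) * (l - γ) ^ s = Real.exp (-γ) * Real.Gamma (s + 1) := by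
  have emb : MeasurableEmbedding (fun x : ℝ => x + γ) :=
    (MeasurableEquiv.addRight γ).measurableEmbedding
  have MP := measurePreserving_add_right (volume : Measure ℝ) γ
  have key := MP.setIntegral_preimage_emb emb (fun l => Real.exp (-l) * (l - γ) ^ s) (Ioi γ)
  rw [preimage_add_const_Ioi, sub_self] at key
  rw [← key, Real.Gamma_eq_integral (by linarith : (0:ℝ) < s + 1), ← integral_const_mul]
  apply setIntegral_congr_fun measurableSet_Ioi
  intro x hx
  simp only [add_sub_cancel_right, neg_add]
  rw [Real.exp_add]
  ring

lemma BKrpow_half (z : ℝ) : z ^ ((1/2):ℝ) = Real.sqrt z := (Real.sqrt_eq_rpow z).symm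

lemma BKrpow_neg_half {z : ℝ} (hz : 0 ≤ z) : z ^ (-(1/2):ℝ) = (Real.sqrt z)⁻¹ := by
  rw [Real.rpow_neg hz, BKrpow_half]

lemma BKrpow_3half {z : ℝ} (hz : 0 ≤ z) : z ^ ((3/2):ℝ) = z * Real.sqrt z := by
  rcases eq_or_lt_of_le hz with h | h
  · rw [← h]; rw [Real.zero_rpow (by norm_num)]; simp
  · rw [show ((3/2):ℝ) = 1 + 1/2 by norm_num, Real.rpow_add h, Real.rpow_one, BKrpow_half]

lemma BKrpow_5half {z : ℝ} (hz : 0 ≤ z) : z ^ ((5/2):ℝ) = z^2 * Real.sqrt z := by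
  rcases eq_or_lt_of_le hz with h | h
  · rw [← h]; rw [Real.zero_rpow (by norm_num)]; simp
  · rw [show ((5/2):ℝ) = 2 + 1/2 by norm_num, Real.rpow_add h, BKrpow_half,
      show ((2:ℝ)) = ((2:ℕ):ℝ) by norm_num, Real.rpow_natCast]

lemma BKaesm {γ : ℝ} (hγ : 0 ≤ γ) {c : ℝ → ℝ} (hc : Continuous c) (p : ℝ) :
    AEStronglyMeasurable (fun l => c l * (l^2 - γ^2) ^ p) (volume.restrict (Ioi γ)) := by
  apply ContinuousOn.aestronglyMeasurable _ measurableSet_Ioi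
  apply hc.continuousOn.mul
  apply ContinuousOn.rpow_const ((continuous_pow 2).continuousOn.sub continuousOn_const)
  intro x hx
  left
  have hx' : γ < x := hx
  show x^2 - γ^2 ≠ 0
  nlinarith [hx'.trans_le' hγ]

section
variable {γ : ℝ}

lemma BKfacts (hγ : 0 < γ) {x : ℝ} (hx : x ∈ Ioi γ) :
    0 < x - γ ∧ 0 < x + γ ∧ Real.sqrt (x^2 - γ^2) = Real.sqrt (x-γ) * Real.sqrt (x+γ) := by
  have hx' : γ < x := hx
  refine ⟨by linarith, by linarith, ?_⟩
  rw [show x^2 - γ^2 = (x-γ)*(x+γ) by ring, Real.sqrt_mul (by linarith)]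

lemma BKsqrt_add_ub (hγ : 0 < γ) {x : ℝ} (hx : x ∈ Ioi γ) :
    Real.sqrt (x + γ) ≤ Real.sqrt (2*γ) * (1 + (x - γ)/(4*γ)) := by
  obtain ⟨h1, h2, h3⟩ := BKfacts hγ hx
  have := BKsqrt_ub (b := 2*γ) (t := x - γ) (by linarith) h1.le
  rw [show 2*γ + (x-γ) = x + γ by ring] at this
  convert this using 3 <;> ring

lemma BKintA (hγ : 0 < γ) :
    IntegrableOn (fun l => Real.exp (-l) * (l^2 - γ^2) ^ (-(1/2):ℝ)) (Ioi γ) := by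
  apply Integrable.mono' (((BKshift_int γ (by norm_num : (-1:ℝ) < -(1/2))).const_mul
    ((Real.sqrt (2*γ))⁻¹)))
    (BKaesm hγ.le (c := fun l => Real.exp (-l)) (by fun_prop) (-(1/2)))
  · refine (ae_restrict_iff' measurableSet_Ioi).mpr (Eventually.of_forall fun x hx => ?_)
    obtain ⟨h1, h2, h3⟩ := BKfacts hγ hx
    have hs2 : (0:ℝ) < Real.sqrt (2*γ) := Real.sqrt_pos.mpr (by linarith)
    have hsxp : (0:ℝ) < Real.sqrt (x+γ) := Real.sqrt_pos.mpr h2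
    have hsx1 : (0:ℝ) < Real.sqrt (x-γ) := Real.sqrt_pos.mpr h1
    rw [BKrpow_neg_half (by nlinarith : (0:ℝ) ≤ x^2 - γ^2), BKrpow_neg_half h1.le,
      Real.norm_eq_abs, abs_of_nonneg (by positivity), h3, mul_inv,
      mul_comm ((Real.sqrt (2*γ))⁻¹) _, mul_assoc]
    gcongr
    linarith




lemma BKintT (hγ : 0 < γ) :
    IntegrableOn (fun l => Real.exp (-l) * (l - γ) * (l^2 - γ^2) ^ (-(1/2):ℝ)) (Ioi γ) := by
  apply Integrable.mono' ((BKshift_int γ (by norm_num : (-1:ℝ) < 1/2)).const_mul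
    ((Real.sqrt (2*γ))⁻¹))
    (BKaesm hγ.le (c := fun l => Real.exp (-l) * (l - γ)) (by fun_prop) (-(1/2)))
  refine (ae_restrict_iff' measurableSet_Ioi).mpr (Eventually.of_forall fun x hx => ?_)
  obtain ⟨h1, h2, h3⟩ := BKfacts hγ hx
  have hs2 : (0:ℝ) < Real.sqrt (2*γ) := Real.sqrt_pos.mpr (by linarith)
  rw [BKrpow_neg_half (by nlinarith : (0:ℝ) ≤ x^2 - γ^2), BKrpow_half,
    Real.norm_eq_abs, abs_of_nonneg (by positivity), h3, mul_inv]
  calc Real.exp (-x) * (x-γ) * ((Real.sqrt (x-γ))⁻¹ * (Real.sqrt (x+γ))⁻¹)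
      = Real.exp (-x) * ((x-γ) / Real.sqrt (x-γ)) * (Real.sqrt (x+γ))⁻¹ := by ring
    _ = Real.exp (-x) * Real.sqrt (x-γ) * (Real.sqrt (x+γ))⁻¹ := by rw [Real.div_sqrt]
    _ ≤ Real.exp (-x) * Real.sqrt (x-γ) * (Real.sqrt (2*γ))⁻¹ := by gcongr; linarith
    _ = (Real.sqrt (2*γ))⁻¹ * (Real.exp (-x) * Real.sqrt (x-γ)) := by ring

lemma BKintB (hγ : 0 < γ) :
    IntegrableOn (fun l => Real.exp (-l) * (l^2 - γ^2) ^ ((1/2):ℝ)) (Ioi γ) := by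
  apply Integrable.mono'
    (((BKshift_int γ (by norm_num : (-1:ℝ) < 1/2)).const_mul (Real.sqrt (2*γ))).add
      ((BKshift_int γ (by norm_num : (-1:ℝ) < 3/2)).const_mul (Real.sqrt (2*γ)/(4*γ))))
    (BKaesm hγ.le (c := fun l => Real.exp (-l)) (by fun_prop) ((1/2):ℝ))
  refine (ae_restrict_iff' measurableSet_Ioi).mpr (Eventually.of_forall fun x hx => ?_)
  obtain ⟨h1, h2, h3⟩ := BKfacts hγ hx
  simp only [Pi.add_apply]
  rw [BKrpow_half, BKrpow_half, BKrpow_3half h1.le,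
    Real.norm_eq_abs, abs_of_nonneg (by positivity), h3]
  calc Real.exp (-x) * (Real.sqrt (x-γ) * Real.sqrt (x+γ))
      ≤ Real.exp (-x) * (Real.sqrt (x-γ) * (Real.sqrt (2*γ) * (1 + (x - γ)/(4*γ)))) := by
        gcongr; exact BKsqrt_add_ub hγ hx
    _ = Real.sqrt (2*γ) * (Real.exp (-x) * Real.sqrt (x-γ))
        + Real.sqrt (2*γ)/(4*γ) * (Real.exp (-x) * ((x-γ) * Real.sqrt (x-γ))) := by ring

lemma BKintM (hγ : 0 < γ) :
    IntegrableOn (fun l => Real.exp (-l) * (l - γ) * (l^2 - γ^2) ^ ((1/2):ℝ)) (Ioi γ) := by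
  apply Integrable.mono'
    (((BKshift_int γ (by norm_num : (-1:ℝ) < 3/2)).const_mul (Real.sqrt (2*γ))).add
      ((BKshift_int γ (by norm_num : (-1:ℝ) < 5/2)).const_mul (Real.sqrt (2*γ)/(4*γ))))
    (BKaesm hγ.le (c := fun l => Real.exp (-l) * (l - γ)) (by fun_prop) ((1/2):ℝ))
  refine (ae_restrict_iff' measurableSet_Ioi).mpr (Eventually.of_forall fun x hx => ?_)
  obtain ⟨h1, h2, h3⟩ := BKfacts hγ hx
  simp only [Pi.add_apply]
  rw [BKrpow_half, BKrpow_3half h1.le, BKrpow_5half h1.le,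
    Real.norm_eq_abs, abs_of_nonneg (by positivity), h3]
  calc Real.exp (-x) * (x-γ) * (Real.sqrt (x-γ) * Real.sqrt (x+γ))
      ≤ Real.exp (-x) * (x-γ) * (Real.sqrt (x-γ) * (Real.sqrt (2*γ) * (1 + (x - γ)/(4*γ)))) := by
        gcongr
        exact BKsqrt_add_ub hγ hx
    _ = Real.sqrt (2*γ) * (Real.exp (-x) * ((x-γ) * Real.sqrt (x-γ)))
        + Real.sqrt (2*γ)/(4*γ) * (Real.exp (-x) * ((x-γ)^2 * Real.sqrt (x-γ))) := by ring

lemma BKintC (hγ : 0 < γ) :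
    IntegrableOn (fun l => Real.exp (-l) * l * (l^2 - γ^2) ^ (-(1/2):ℝ)) (Ioi γ) := by
  apply IntegrableOn.congr_fun (((BKintA hγ).const_mul γ).add (BKintT hγ)) _ measurableSet_Ioi
  intro x hx
  simp only [Pi.add_apply]
  ring



end

lemma BKibp {γ : ℝ} (hγ : 0 < γ) :
    ∫ l in Ioi γ, Real.exp (-l) * l * (l^2 - γ^2) ^ (-(1/2):ℝ)
      = ∫ l in Ioi γ, Real.exp (-l) * (l^2 - γ^2) ^ ((1/2):ℝ) := by
  set F : ℝ → ℝ := fun l => Real.exp (-l) * (l^2 - γ^2) ^ ((1/2):ℝ) with hF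
  set f' : ℝ → ℝ := fun l => Real.exp (-l) * l * (l^2 - γ^2) ^ (-(1/2):ℝ)
    - Real.exp (-l) * (l^2 - γ^2) ^ ((1/2):ℝ) with hf'
  have key : ∫ l in Ioi γ, f' l = 0 - F γ := by
    apply integral_Ioi_of_hasDerivAt_of_tendsto
    · -- continuity at γ within Ici γ
      apply Continuous.continuousWithinAt
      apply (Real.continuous_exp.comp continuous_neg).mul
      apply Continuous.rpow_const ((continuous_pow 2).sub continuous_const)
      intro x; right; norm_num
    · intro x hx
      have hx' : γ < x := hx
      have h3 : (0:ℝ) < x^2 - γ^2 := by nlinarith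
      have d1 : HasDerivAt (fun y : ℝ => y^2 - γ^2) (2*x) x := by
        simpa using (hasDerivAt_pow 2 x).sub_const (γ^2)
      have d2 := d1.rpow_const (p := ((1/2):ℝ)) (Or.inl (ne_of_gt h3))
      have d3 : HasDerivAt (fun y : ℝ => Real.exp (-y)) (Real.exp (-x) * (-1)) x :=
        ((hasDerivAt_id x).neg).exp
      have := d3.mul d2
      refine this.congr_deriv ?_
      rw [hf']
      simp only
      rw [show ((1/2):ℝ) - 1 = -(1/2) by norm_num]
      ring
    · -- integrability of f'
      exact (BKintC hγ).sub (BKintB hγ)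
    · -- tendsto 0
      rw [hF]
      have hb : ∀ᶠ (x:ℝ) in atTop,
          ‖Real.exp (-x) * (x^2 - γ^2) ^ ((1/2):ℝ)‖ ≤ x * Real.exp (-x) := by
        filter_upwards [eventually_ge_atTop (max γ 0)] with x hx
        have hx0 : 0 ≤ x := le_trans (le_max_right _ _) hx
        have hxγ : γ ≤ x := le_trans (le_max_left _ _) hx
        have h4 : (0:ℝ) ≤ x^2 - γ^2 := by nlinarith
        rw [Real.norm_eq_abs, abs_of_nonneg (by positivity),
          show (x^2-γ^2) ^ ((1/2):ℝ) = Real.sqrt (x^2-γ^2) from (Real.sqrt_eq_rpow _).symm]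
        calc Real.exp (-x) * Real.sqrt (x^2 - γ^2)
            ≤ Real.exp (-x) * Real.sqrt (x^2) := by
              gcongr; nlinarith [sq_nonneg γ]
          _ = x * Real.exp (-x) := by rw [Real.sqrt_sq hx0]; ring
      have ht : Tendsto (fun x : ℝ => x * Real.exp (-x)) atTop (𝓝 0) := by
        simpa using Real.tendsto_pow_mul_exp_neg_atTop_nhds_zero 1
      exact squeeze_zero_norm' hb ht
  have hFγ : F γ = 0 := by
    rw [hF]; simp only [sub_self]
    rw [Real.zero_rpow (by norm_num)]
    simp
  rw [hFγ, sub_zero] at key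
  rw [hf'] at key
  rw [integral_sub (BKintC hγ) (BKintB hγ)] at key
  linarith

section
variable {γ : ℝ}

-- γ * IA = IB - IT
lemma BKid (hγ : 0 < γ) :
    γ * (∫ l in Ioi γ, Real.exp (-l) * (l^2 - γ^2) ^ (-(1/2):ℝ))
      = (∫ l in Ioi γ, Real.exp (-l) * (l^2 - γ^2) ^ ((1/2):ℝ))
        - ∫ l in Ioi γ, Real.exp (-l) * (l - γ) * (l^2 - γ^2) ^ (-(1/2):ℝ) := by
  have h1 : ∫ l in Ioi γ, Real.exp (-l) * l * (l^2 - γ^2) ^ (-(1/2):ℝ)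
      = ∫ l in Ioi γ, (γ * (Real.exp (-l) * (l^2 - γ^2) ^ (-(1/2):ℝ))
        + Real.exp (-l) * (l - γ) * (l^2 - γ^2) ^ (-(1/2):ℝ)) := by
    apply setIntegral_congr_fun measurableSet_Ioi
    intro x _; ring
  rw [integral_add ((BKintA hγ).const_mul γ) (BKintT hγ), integral_const_mul] at h1
  have h2 := BKibp hγ
  linarith [h1 ▸ h2]

-- IT ≤ 1/(2γ) IB
lemma BKineq1 (hγ : 0 < γ) :
    (∫ l in Ioi γ, Real.exp (-l) * (l - γ) * (l^2 - γ^2) ^ (-(1/2):ℝ))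
      ≤ 1/(2*γ) * ∫ l in Ioi γ, Real.exp (-l) * (l^2 - γ^2) ^ ((1/2):ℝ) := by
  rw [← integral_const_mul]
  apply setIntegral_mono_on (BKintT hγ) ((BKintB hγ).const_mul _) measurableSet_Ioi
  intro x hx
  obtain ⟨h1, h2, h3⟩ := BKfacts hγ hx
  have hsb : (0:ℝ) < Real.sqrt (x+γ) := Real.sqrt_pos.mpr h2
  have hsb2 : Real.sqrt (x+γ) * Real.sqrt (x+γ) = x + γ := Real.mul_self_sqrt h2.le
  rw [BKrpow_neg_half (by nlinarith : (0:ℝ) ≤ x^2 - γ^2), BKrpow_half, h3, mul_inv]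
  have hinv : (Real.sqrt (x+γ))⁻¹ = Real.sqrt (x+γ) / (x+γ) := by
    rw [eq_div_iff (ne_of_gt h2), inv_mul_eq_div, div_eq_iff (ne_of_gt hsb)]
    linarith [hsb2]
  calc Real.exp (-x) * (x-γ) * ((Real.sqrt (x-γ))⁻¹ * (Real.sqrt (x+γ))⁻¹)
      = Real.exp (-x) * ((x-γ) / Real.sqrt (x-γ)) * (Real.sqrt (x+γ))⁻¹ := by ring
    _ = Real.exp (-x) * Real.sqrt (x-γ) * (Real.sqrt (x+γ))⁻¹ := by rw [Real.div_sqrt]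
    _ = Real.exp (-x) * Real.sqrt (x-γ) * (Real.sqrt (x+γ) / (x+γ)) := by rw [hinv]
    _ ≤ Real.exp (-x) * Real.sqrt (x-γ) * (Real.sqrt (x+γ) / (2*γ)) := by
        gcongr
        linarith
    _ = 1/(2*γ) * (Real.exp (-x) * (Real.sqrt (x-γ) * Real.sqrt (x+γ))) := by ring

-- 1/(2γ) IB - 1/(4γ²) IM ≤ IT
lemma BKineq2 (hγ : 0 < γ) :
    1/(2*γ) * (∫ l in Ioi γ, Real.exp (-l) * (l^2 - γ^2) ^ ((1/2):ℝ))
      - 1/(4*γ^2) * (∫ l in Ioi γ, Real.exp (-l) * (l - γ) * (l^2 - γ^2) ^ ((1/2):ℝ))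
      ≤ ∫ l in Ioi γ, Real.exp (-l) * (l - γ) * (l^2 - γ^2) ^ (-(1/2):ℝ) := by
  rw [← integral_const_mul, ← integral_const_mul,
    ← integral_sub ((BKintB hγ).const_mul _) ((BKintM hγ).const_mul _)]
  apply setIntegral_mono_on (Integrable.sub ((BKintB hγ).const_mul _) ((BKintM hγ).const_mul _))
    (BKintT hγ) measurableSet_Ioi
  intro x hx
  obtain ⟨h1, h2, h3⟩ := BKfacts hγ hx
  have hsb : (0:ℝ) < Real.sqrt (x+γ) := Real.sqrt_pos.mpr h2
  have hsb2 : Real.sqrt (x+γ) * Real.sqrt (x+γ) = x + γ := Real.mul_self_sqrt h2.le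
  simp only [Pi.sub_apply]
  rw [BKrpow_neg_half (by nlinarith : (0:ℝ) ≤ x^2 - γ^2), BKrpow_half, h3, mul_inv]
  have hinv : (Real.sqrt (x+γ))⁻¹ = Real.sqrt (x+γ) / (x+γ) := by
    rw [eq_div_iff (ne_of_gt h2), inv_mul_eq_div, div_eq_iff (ne_of_gt hsb)]
    linarith [hsb2]
  have key : 1/(2*γ) - (x-γ)/(4*γ^2) ≤ 1/(x+γ) := by
    rw [← sub_nonneg]
    have expand : 1/(x+γ) - (1/(2*γ) - (x-γ)/(4*γ^2)) = (x-γ)^2/((x+γ)*(4*γ^2)) := by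
      field_simp; ring
    rw [expand]; positivity
  have hW : (0:ℝ) ≤ Real.exp (-x) * (Real.sqrt (x-γ) * Real.sqrt (x+γ)) := by positivity
  calc 1/(2*γ) * (Real.exp (-x) * (Real.sqrt (x-γ) * Real.sqrt (x+γ)))
        - 1/(4*γ^2) * (Real.exp (-x) * (x-γ) * (Real.sqrt (x-γ) * Real.sqrt (x+γ)))
      = (Real.exp (-x) * (Real.sqrt (x-γ) * Real.sqrt (x+γ))) * (1/(2*γ) - (x-γ)/(4*γ^2)) := by
        ring
    _ ≤ (Real.exp (-x) * (Real.sqrt (x-γ) * Real.sqrt (x+γ))) * (1/(x+γ)) :=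
        mul_le_mul_of_nonneg_left key hW
    _ = Real.exp (-x) * (x-γ) * ((Real.sqrt (x-γ))⁻¹ * (Real.sqrt (x+γ))⁻¹) := by
        rw [hinv]
        rw [show Real.exp (-x) * (x-γ) * ((Real.sqrt (x-γ))⁻¹ * (Real.sqrt (x+γ) / (x+γ)))
          = Real.exp (-x) * ((x-γ) / Real.sqrt (x-γ)) * (Real.sqrt (x+γ) / (x+γ)) by ring,
          Real.div_sqrt]
        field_simp
end

section
variable {γ : ℝ}

-- IM ≤ √(2γ) G32 + √(2γ)/(4γ) G52
lemma BKineq3 (hγ : 0 < γ) :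
    (∫ l in Ioi γ, Real.exp (-l) * (l - γ) * (l^2 - γ^2) ^ ((1/2):ℝ))
      ≤ Real.sqrt (2*γ) * (∫ l in Ioi γ, Real.exp (-l) * (l - γ) ^ ((3/2):ℝ))
        + Real.sqrt (2*γ)/(4*γ) * ∫ l in Ioi γ, Real.exp (-l) * (l - γ) ^ ((5/2):ℝ) := by
  rw [← integral_const_mul, ← integral_const_mul,
    ← integral_add ((BKshift_int γ (by norm_num : (-1:ℝ) < 3/2)).const_mul _)
      ((BKshift_int γ (by norm_num : (-1:ℝ) < 5/2)).const_mul _)]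
  apply setIntegral_mono_on (BKintM hγ)
    (Integrable.add ((BKshift_int γ (by norm_num : (-1:ℝ) < 3/2)).const_mul _)
      ((BKshift_int γ (by norm_num : (-1:ℝ) < 5/2)).const_mul _)) measurableSet_Ioi
  intro x hx
  obtain ⟨h1, h2, h3⟩ := BKfacts hγ hx
  simp only [Pi.add_apply]
  rw [BKrpow_half, BKrpow_3half h1.le, BKrpow_5half h1.le, h3]
  calc Real.exp (-x) * (x-γ) * (Real.sqrt (x-γ) * Real.sqrt (x+γ))
      ≤ Real.exp (-x) * (x-γ) * (Real.sqrt (x-γ) * (Real.sqrt (2*γ) * (1 + (x - γ)/(4*γ)))) := by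
        gcongr
        exact BKsqrt_add_ub hγ hx
    _ = Real.sqrt (2*γ) * (Real.exp (-x) * ((x-γ) * Real.sqrt (x-γ)))
        + Real.sqrt (2*γ)/(4*γ) * (Real.exp (-x) * ((x-γ)^2 * Real.sqrt (x-γ))) := by ring

-- √(2γ) G12 + √(2γ)/(4γ) G32 - √(2γ)/(32γ²) G52 ≤ IB
lemma BKineq4 (hγ : 0 < γ) :
    Real.sqrt (2*γ) * (∫ l in Ioi γ, Real.exp (-l) * (l - γ) ^ ((1/2):ℝ))
      + Real.sqrt (2*γ)/(4*γ) * (∫ l in Ioi γ, Real.exp (-l) * (l - γ) ^ ((3/2):ℝ))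
      - Real.sqrt (2*γ)/(32*γ^2) * (∫ l in Ioi γ, Real.exp (-l) * (l - γ) ^ ((5/2):ℝ))
      ≤ ∫ l in Ioi γ, Real.exp (-l) * (l^2 - γ^2) ^ ((1/2):ℝ) := by
  have i1 := (BKshift_int γ (by norm_num : (-1:ℝ) < 1/2)).const_mul (Real.sqrt (2*γ))
  have i2 := (BKshift_int γ (by norm_num : (-1:ℝ) < 3/2)).const_mul (Real.sqrt (2*γ)/(4*γ))
  have i3 := (BKshift_int γ (by norm_num : (-1:ℝ) < 5/2)).const_mul (Real.sqrt (2*γ)/(32*γ^2))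
  have i12 : IntegrableOn (fun l => Real.sqrt (2*γ) * (Real.exp (-l) * (l - γ) ^ ((1/2):ℝ))
      + Real.sqrt (2*γ)/(4*γ) * (Real.exp (-l) * (l - γ) ^ ((3/2):ℝ))) (Ioi γ) := i1.add i2
  have iF : IntegrableOn (fun l => Real.sqrt (2*γ) * (Real.exp (-l) * (l - γ) ^ ((1/2):ℝ))
      + Real.sqrt (2*γ)/(4*γ) * (Real.exp (-l) * (l - γ) ^ ((3/2):ℝ))
      - Real.sqrt (2*γ)/(32*γ^2) * (Real.exp (-l) * (l - γ) ^ ((5/2):ℝ))) (Ioi γ) := i12.sub i3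
  have hsplit : ∫ l in Ioi γ,
      (Real.sqrt (2*γ) * (Real.exp (-l) * (l - γ) ^ ((1/2):ℝ))
        + Real.sqrt (2*γ)/(4*γ) * (Real.exp (-l) * (l - γ) ^ ((3/2):ℝ))
        - Real.sqrt (2*γ)/(32*γ^2) * (Real.exp (-l) * (l - γ) ^ ((5/2):ℝ)))
      = Real.sqrt (2*γ) * (∫ l in Ioi γ, Real.exp (-l) * (l - γ) ^ ((1/2):ℝ))
        + Real.sqrt (2*γ)/(4*γ) * (∫ l in Ioi γ, Real.exp (-l) * (l - γ) ^ ((3/2):ℝ))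
        - Real.sqrt (2*γ)/(32*γ^2) * (∫ l in Ioi γ, Real.exp (-l) * (l - γ) ^ ((5/2):ℝ)) := by
    rw [integral_sub i12 i3, integral_add i1 i2, integral_const_mul, integral_const_mul,
      integral_const_mul]
  rw [← hsplit]
  apply setIntegral_mono_on iF (BKintB hγ) measurableSet_Ioi
  intro x hx
  obtain ⟨h1, h2, h3⟩ := BKfacts hγ hx
  rw [BKrpow_half, BKrpow_half, BKrpow_3half h1.le, BKrpow_5half h1.le, h3]
  have hlb := BKsqrt_lb (b := 2*γ) (t := x - γ) (by linarith) h1.le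
  rw [show 2*γ + (x-γ) = x + γ by ring] at hlb
  have hlb' : Real.sqrt (2*γ) * (1 + (x-γ)/(4*γ) - (x-γ)^2/(32*γ^2)) ≤ Real.sqrt (x+γ) := by
    convert hlb using 4
    · ring
    · ring
  calc Real.sqrt (2*γ) * (Real.exp (-x) * Real.sqrt (x-γ))
        + Real.sqrt (2*γ)/(4*γ) * (Real.exp (-x) * ((x-γ) * Real.sqrt (x-γ)))
        - Real.sqrt (2*γ)/(32*γ^2) * (Real.exp (-x) * ((x-γ)^2 * Real.sqrt (x-γ)))
      = (Real.exp (-x) * Real.sqrt (x-γ))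
          * (Real.sqrt (2*γ) * (1 + (x-γ)/(4*γ) - (x-γ)^2/(32*γ^2))) := by ring
    _ ≤ (Real.exp (-x) * Real.sqrt (x-γ)) * Real.sqrt (x+γ) :=
        mul_le_mul_of_nonneg_left hlb' (by positivity)
    _ = Real.exp (-x) * (Real.sqrt (x-γ) * Real.sqrt (x+γ)) := by ring
end

/-- The modified Bessel function of the second kind of integer order `j`,
defined by the integral representation
`K_j(γ) = (2^j j!/(2j)!) γ^{-j} ∫_γ^∞ e^{-λ} (λ² - γ²)^{j-1/2} dλ`. -/
noncomputable def besselK (j : ℕ) (γ : ℝ) : ℝ :=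
  ((2 : ℝ) ^ j * (Nat.factorial j) / (Nat.factorial (2 * j))) * γ ^ (-(j : ℝ)) *
    ∫ l in Set.Ioi γ, Real.exp (-l) * (l ^ 2 - γ ^ 2) ^ ((j : ℝ) - 1 / 2)

set_option maxHeartbeats 1000000 in
/-- Quantitative bounds for the ratio K₀/K₁ in the regime γ > √2. -/
theorem besselK_ratio_bounds (γ : ℝ) (hγ : Real.sqrt 2 < γ) :
    1 - 1 / (2 * γ) ≤ besselK 0 γ / besselK 1 γ ∧
    besselK 0 γ / besselK 1 γ ≤ 1 - 1 / (2 * γ) + 3 / (8 * γ ^ 2) + 3 / (16 * γ ^ 3) := by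
  have hγ1 : 1 < γ := lt_of_le_of_lt (by
    rw [show (1:ℝ) = Real.sqrt 1 by simp]
    exact Real.sqrt_le_sqrt (by norm_num)) hγ
  have hγ0 : 0 < γ := by linarith
  set IA := ∫ l in Ioi γ, Real.exp (-l) * (l^2 - γ^2) ^ (-(1/2):ℝ) with hIA
  set IB := ∫ l in Ioi γ, Real.exp (-l) * (l^2 - γ^2) ^ ((1/2):ℝ) with hIB
  set IT := ∫ l in Ioi γ, Real.exp (-l) * (l - γ) * (l^2 - γ^2) ^ (-(1/2):ℝ) with hIT
  set IM := ∫ l in Ioi γ, Real.exp (-l) * (l - γ) * (l^2 - γ^2) ^ ((1/2):ℝ) with hIM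
  -- gamma integrals
  have hP : (0:ℝ) < Real.exp (-γ) * Real.Gamma (3/2) :=
    mul_pos (Real.exp_pos _) (Real.Gamma_pos_of_pos (by norm_num))
  set P := Real.exp (-γ) * Real.Gamma (3/2) with hPdef
  have hG1 : ∫ l in Ioi γ, Real.exp (-l) * (l - γ) ^ ((1/2):ℝ) = P := by
    rw [BKshift_val γ (by norm_num : (-1:ℝ) < 1/2), hPdef]
    norm_num
  have hG3 : ∫ l in Ioi γ, Real.exp (-l) * (l - γ) ^ ((3/2):ℝ) = (3/2) * P := by
    rw [BKshift_val γ (by norm_num : (-1:ℝ) < 3/2), hPdef,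
      show ((3:ℝ)/2 + 1) = (3/2) + 1 by norm_num, Real.Gamma_add_one (by norm_num)]
    ring
  have hG5 : ∫ l in Ioi γ, Real.exp (-l) * (l - γ) ^ ((5/2):ℝ) = (15/4) * P := by
    rw [BKshift_val γ (by norm_num : (-1:ℝ) < 5/2),
      show ((5:ℝ)/2 + 1) = (5/2) + 1 by norm_num, Real.Gamma_add_one (by norm_num),
      show ((5:ℝ)/2) = (3/2) + 1 by norm_num, Real.Gamma_add_one (by norm_num), hPdef]
    ring
  set Q := Real.sqrt (2*γ) with hQdef
  have hQ : 0 < Q := Real.sqrt_pos.mpr (by linarith)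
  -- upper bound on IM
  have hMub : IM ≤ Q * P * (3/2 + 15/(16*γ)) := by
    have := BKineq3 hγ0
    rw [hG3, hG5] at this
    calc IM ≤ Q * ((3/2)*P) + Q/(4*γ) * ((15/4)*P) := this
      _ = Q * P * (3/2 + 15/(16*γ)) := by field_simp; ring
  -- lower bound on IB
  have hBlb : Q * P * (1 + 3/(8*γ) - 15/(128*γ^2)) ≤ IB := by
    have := BKineq4 hγ0
    rw [hG1, hG3, hG5] at this
    calc Q * P * (1 + 3/(8*γ) - 15/(128*γ^2))
        = Q * P + Q/(4*γ) * ((3/2)*P) - Q/(32*γ^2) * ((15/4)*P) := by field_simp; ring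
      _ ≤ IB := this
  have hbracket : (0:ℝ) < 1 + 3/(8*γ) - 15/(128*γ^2) := by
    have h1 : 15/(128*γ^2) < 1 := by
      rw [div_lt_one (by positivity)]; nlinarith
    have h2 : 0 < 3/(8*γ) := by positivity
    linarith
  have hIBpos : 0 < IB := lt_of_lt_of_le (by positivity) hBlb
  -- IM ≤ (3/2 + 3/(4γ)) * IB
  have hscalar : (3/2 + 15/(16*γ)) ≤ (3/2 + 3/(4*γ)) * (1 + 3/(8*γ) - 15/(128*γ^2)) := by
    rw [← sub_nonneg]
    have expand : (3/2 + 3/(4*γ)) * (1 + 3/(8*γ) - 15/(128*γ^2)) - (3/2 + 15/(16*γ))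
        = (192*γ^2 + 54*γ - 45) / (512*γ^3) := by field_simp; ring
    rw [expand]
    apply div_nonneg _ (by positivity)
    nlinarith
  have hM2 : IM ≤ (3/2 + 3/(4*γ)) * IB := by
    calc IM ≤ Q * P * (3/2 + 15/(16*γ)) := hMub
      _ ≤ Q * P * ((3/2 + 3/(4*γ)) * (1 + 3/(8*γ) - 15/(128*γ^2))) := by
          apply mul_le_mul_of_nonneg_left hscalar (by positivity)
      _ = (3/2 + 3/(4*γ)) * (Q * P * (1 + 3/(8*γ) - 15/(128*γ^2))) := by ring
      _ ≤ (3/2 + 3/(4*γ)) * IB := by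
          apply mul_le_mul_of_nonneg_left hBlb (by positivity)
  -- bounds on γ IA
  have hid : γ * IA = IB - IT := BKid hγ0
  have hT1 : IT ≤ 1/(2*γ) * IB := BKineq1 hγ0
  have hT2 : 1/(2*γ) * IB - 1/(4*γ^2) * IM ≤ IT := BKineq2 hγ0
  have hlow : (1 - 1/(2*γ)) * IB ≤ γ * IA := by
    rw [hid]
    have e1 : (1 - 1/(2*γ)) * IB = IB - 1/(2*γ) * IB := by ring
    linarith
  have hupp : γ * IA ≤ (1 - 1/(2*γ) + 3/(8*γ^2) + 3/(16*γ^3)) * IB := by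
    rw [hid]
    have hc : (0:ℝ) ≤ 1/(4*γ^2) := by positivity
    have hm := mul_le_mul_of_nonneg_left hM2 hc
    have hT3 : 1/(2*γ) * IB - 1/(4*γ^2) * ((3/2 + 3/(4*γ)) * IB) ≤ IT := by linarith
    have hexp : 1/(2*γ) * IB - 1/(4*γ^2) * ((3/2 + 3/(4*γ)) * IB)
        = IB - (1 - 1/(2*γ) + 3/(8*γ^2) + 3/(16*γ^3)) * IB := by field_simp; ring
    linarith [hexp ▸ hT3]
  -- ratio
  have h0 : besselK 0 γ = IA := by
    rw [hIA]; simp [besselK]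
  have h1 : besselK 1 γ = γ⁻¹ * IB := by
    rw [hIB]; simp [besselK, Real.rpow_neg_one]; norm_num
  have hratio : besselK 0 γ / besselK 1 γ = γ * IA / IB := by
    rw [h0, h1]
    field_simp
  constructor
  · rw [hratio, le_div_iff₀ hIBpos]
    calc (1 - 1/(2*γ)) * IB ≤ γ * IA := hlow
    _ = γ * IA := rfl
  · rw [hratio, div_le_iff₀ hIBpos]
    calc γ * IA ≤ (1 - 1/(2*γ) + 3/(8*γ^2) + 3/(16*γ^3)) * IB := hupp
    _ = (1 - 1/(2*γ) + 3/(8*γ^2) + 3/(16*γ^3)) * IB := rfl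
end
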